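/- For any density matrix ρ, any d×d unitary matrix U relating two orthonormal bases, the induced probability vectors p and q, and any α > 1, one has H_α(p) + H_α(q) ≥ (2/(1−α)) ln((1 + ∑_{i=1}^d W_i^α)/2), where W = (s₁, s₂−s₁, …, s_d−s_{d−1}). -/

import Mathlib

open scoped BigOperators Matrix ComplexConjugate ComplexOrder

/-- Shannon entropy of a finite real vector (natural logarithm). -/
noncomputable def shannonEntropy {n : Type*} [Fintype n] (x : n → ℝ) : ℝ :=
  -∑ i, x i * Real.log (x i)

/-- Von Neumann entropy of a Hermitian matrix, `-∑ λᵢ ln λᵢ`. -/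
noncomputable def vonNeumannEntropy {d : ℕ} {ρ : Matrix (Fin d) (Fin d) ℂ}
    (hρ : ρ.IsHermitian) : ℝ :=
  -∑ i, hρ.eigenvalues i * Real.log (hρ.eigenvalues i)

/-- Rényi entropy of order `α ≠ 1` (natural logarithm). -/
noncomputable def renyiEntropy {n : Type*} [Fintype n] (α : ℝ) (x : n → ℝ) : ℝ :=
  (1 / (1 - α)) * Real.log (∑ i, x i ^ α)

/-- The operator norm (largest singular value) of the submatrix of `U` with rows `I`
and columns `J`, expressed as the supremum of `|⟨x, U y⟩|` over unit vectors supported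
on `I` resp. `J`. -/
noncomputable def subOpNorm {d : ℕ} (U : Matrix (Fin d) (Fin d) ℂ)
    (I J : Finset (Fin d)) : ℝ :=
  sSup { r : ℝ | ∃ (x : I → ℂ) (y : J → ℂ),
    (∑ i, ‖x i‖ ^ 2 = 1) ∧ (∑ j, ‖y j‖ ^ 2 = 1) ∧
    r = ‖∑ i : I, ∑ j : J, (starRingEnd ℂ) (x i) * U i.1 j.1 * y j‖ }

/-- `sCoef U k` is the coefficient `s_k`: the maximal operator norm of a submatrix of `U`
of class `k`, i.e. with `#rows + #cols = k + 1` (for `k = 0` the set is empty and the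
supremum equals `0`). -/
noncomputable def sCoef {d : ℕ} (U : Matrix (Fin d) (Fin d) ℂ) (k : ℕ) : ℝ :=
  sSup { r : ℝ | ∃ I J : Finset (Fin d), I.Nonempty ∧ J.Nonempty ∧
    I.card + J.card = k + 1 ∧ r = subOpNorm U I J }

/-- The vector `W = (s₁, s₂ - s₁, …, s_d - s_{d-1})`. -/
noncomputable def Wvec {d : ℕ} (U : Matrix (Fin d) (Fin d) ℂ) : Fin d → ℝ :=
  fun k => sCoef U (k.val + 1) - (if k.val = 0 then 0 else sCoef U k.val)

noncomputable def nsq {d : ℕ} (v : Fin d → ℂ) : ℝ := ∑ i, ‖v i‖ ^ 2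



lemma nsq_nonneg {d : ℕ} (v : Fin d → ℂ) : 0 ≤ nsq v :=
  Finset.sum_nonneg fun i _ => by positivity

lemma nsq_eq_norm_sq {d : ℕ} (v : Fin d → ℂ) :
    nsq v = ‖(WithLp.equiv 2 (Fin d → ℂ)).symm v‖ ^ 2 := by
  rw [EuclideanSpace.norm_eq]
  rw [Real.sq_sqrt (by positivity)]
  rfl

lemma inner_eq_dot {d : ℕ} (a b : Fin d → ℂ) :
    (inner ℂ ((WithLp.equiv 2 (Fin d → ℂ)).symm a) ((WithLp.equiv 2 (Fin d → ℂ)).symm b) : ℂ)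
      = star a ⬝ᵥ b := by
  rw [PiLp.inner_apply]
  simp [dotProduct, RCLike.inner_apply, mul_comm]

lemma cs_dot {d : ℕ} (a b : Fin d → ℂ) :
    ‖star a ⬝ᵥ b‖ ≤ Real.sqrt (nsq a) * Real.sqrt (nsq b) := by
  rw [← inner_eq_dot]
  refine (norm_inner_le_norm (𝕜 := ℂ) _ _).trans_eq ?_
  rw [EuclideanSpace.norm_eq, EuclideanSpace.norm_eq]
  rfl

lemma nsq_add {d : ℕ} (a b : Fin d → ℂ) :
    nsq (a + b) = nsq a + nsq b + 2 * (star a ⬝ᵥ b).re := by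
  have h := @norm_add_sq ℂ _ _ _ _ ((WithLp.equiv 2 (Fin d → ℂ)).symm a)
      ((WithLp.equiv 2 (Fin d → ℂ)).symm b)
  have : (WithLp.equiv 2 (Fin d → ℂ)).symm a + (WithLp.equiv 2 (Fin d → ℂ)).symm b
      = (WithLp.equiv 2 (Fin d → ℂ)).symm (a + b) := rfl
  rw [this, inner_eq_dot] at h
  rw [nsq_eq_norm_sq, nsq_eq_norm_sq, nsq_eq_norm_sq, h]
  simp [RCLike.re_to_complex]
  ring

lemma nsq_dot {d : ℕ} (v : Fin d → ℂ) : (star v ⬝ᵥ v).re = nsq v := by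
  simp [dotProduct, Complex.re_sum]
  refine Finset.sum_congr rfl fun i _ => ?_
  rw [← Complex.normSq_eq_norm_sq, Complex.normSq_apply]

lemma nsq_mulVec {d : ℕ} {U : Matrix (Fin d) (Fin d) ℂ}
    (hU : U ∈ Matrix.unitaryGroup (Fin d) ℂ) (y : Fin d → ℂ) :
    nsq (U.mulVec y) = nsq y := by
  rw [← nsq_dot, ← nsq_dot]
  congr 1
  rw [Matrix.star_mulVec, Matrix.dotProduct_mulVec, Matrix.vecMul_vecMul]
  have h1 : Uᴴ * U = 1 := hU.1
  rw [h1, Matrix.vecMul_one]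



/-- zero-extension of a vector supported on `I` -/
def extC {d : ℕ} (I : Finset (Fin d)) (x : I → ℂ) : Fin d → ℂ :=
  fun a => if h : a ∈ I then x ⟨a, h⟩ else 0

lemma sum_extC {d : ℕ} {M : Type*} [AddCommMonoid M] (I : Finset (Fin d))
    (F : Fin d → ℂ → M) (hF : ∀ a, F a 0 = 0) (x : I → ℂ) :
    ∑ a : Fin d, F a (extC I x a) = ∑ i : I, F i.1 (x i) := by
  have h1 : ∑ a : Fin d, F a (extC I x a) = ∑ a ∈ I, F a (extC I x a) :=
    (Finset.sum_subset I.subset_univ (fun a _ ha => by simp [extC, ha, hF])).symm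
  rw [h1, ← Finset.sum_attach I (fun a => F a (extC I x a)), Finset.univ_eq_attach]
  exact Finset.sum_congr rfl (fun a _ => by simp [extC, a.2])

lemma nsq_extC {d : ℕ} (I : Finset (Fin d)) (x : I → ℂ) :
    nsq (extC I x) = ∑ i : I, ‖x i‖ ^ 2 :=
  sum_extC I (fun _ z => ‖z‖ ^ 2) (fun _ => by simp) x

lemma dot_extC {d : ℕ} (U : Matrix (Fin d) (Fin d) ℂ) (I J : Finset (Fin d))
    (x : I → ℂ) (y : J → ℂ) :
    star (extC I x) ⬝ᵥ U.mulVec (extC J y)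
      = ∑ i : I, ∑ j : J, (starRingEnd ℂ) (x i) * U i.1 j.1 * y j := by
  have h1 : star (extC I x) ⬝ᵥ U.mulVec (extC J y)
      = ∑ a : Fin d, (starRingEnd ℂ) (extC I x a) * (U.mulVec (extC J y)) a := by
    simp [dotProduct, Complex.star_def]
  rw [h1, sum_extC I (fun a z => (starRingEnd ℂ) z * (U.mulVec (extC J y)) a)
    (fun a => by simp) x]
  refine Finset.sum_congr rfl (fun i _ => ?_)
  have h2 : (U.mulVec (extC J y)) i.1 = ∑ j : J, U i.1 j.1 * y j := by
    rw [Matrix.mulVec, dotProduct]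
    exact sum_extC J (fun b z => U i.1 b * z) (fun b => by simp) y
  rw [h2, Finset.mul_sum]
  exact Finset.sum_congr rfl (fun j _ => by ring)

section SubOp
variable {d : ℕ} {U : Matrix (Fin d) (Fin d) ℂ}

lemma norm_double_sum_le_one (hU : U ∈ Matrix.unitaryGroup (Fin d) ℂ)
    (I J : Finset (Fin d)) (x : I → ℂ) (y : J → ℂ)
    (hx : ∑ i, ‖x i‖ ^ 2 = 1) (hy : ∑ j, ‖y j‖ ^ 2 = 1) :
    ‖∑ i : I, ∑ j : J, (starRingEnd ℂ) (x i) * U i.1 j.1 * y j‖ ≤ 1 := by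
  rw [← dot_extC]
  refine (cs_dot _ _).trans_eq ?_
  rw [nsq_mulVec hU, nsq_extC, nsq_extC, hx, hy]
  simp

lemma subOpNorm_bddAbove (hU : U ∈ Matrix.unitaryGroup (Fin d) ℂ)
    (I J : Finset (Fin d)) :
    BddAbove { r : ℝ | ∃ (x : I → ℂ) (y : J → ℂ),
      (∑ i, ‖x i‖ ^ 2 = 1) ∧ (∑ j, ‖y j‖ ^ 2 = 1) ∧
      r = ‖∑ i : I, ∑ j : J, (starRingEnd ℂ) (x i) * U i.1 j.1 * y j‖ } := by
  refine ⟨1, ?_⟩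
  rintro r ⟨x, y, hx, hy, rfl⟩
  exact norm_double_sum_le_one hU I J x y hx hy

lemma subOpNorm_le_one (hU : U ∈ Matrix.unitaryGroup (Fin d) ℂ)
    (I J : Finset (Fin d)) : subOpNorm U I J ≤ 1 := by
  refine Real.sSup_le ?_ zero_le_one
  rintro r ⟨x, y, hx, hy, rfl⟩
  exact norm_double_sum_le_one hU I J x y hx hy

lemma le_subOpNorm (hU : U ∈ Matrix.unitaryGroup (Fin d) ℂ)
    (I J : Finset (Fin d)) (x : I → ℂ) (y : J → ℂ)
    (hx : ∑ i, ‖x i‖ ^ 2 = 1) (hy : ∑ j, ‖y j‖ ^ 2 = 1) :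
    ‖∑ i : I, ∑ j : J, (starRingEnd ℂ) (x i) * U i.1 j.1 * y j‖ ≤ subOpNorm U I J :=
  le_csSup (subOpNorm_bddAbove hU I J) ⟨x, y, hx, hy, rfl⟩

lemma subOpNorm_nonneg (hU : U ∈ Matrix.unitaryGroup (Fin d) ℂ)
    {I J : Finset (Fin d)} (hI : I.Nonempty) (hJ : J.Nonempty) :
    0 ≤ subOpNorm U I J := by
  obtain ⟨i0, hi0⟩ := hI
  obtain ⟨j0, hj0⟩ := hJ
  have hx : ∑ i : I, ‖(fun i : I => if i = ⟨i0, hi0⟩ then (1:ℂ) else 0) i‖ ^ 2 = 1 := by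
    rw [Finset.sum_eq_single (⟨i0, hi0⟩ : I)] <;> simp +contextual
  have hy : ∑ j : J, ‖(fun j : J => if j = ⟨j0, hj0⟩ then (1:ℂ) else 0) j‖ ^ 2 = 1 := by
    rw [Finset.sum_eq_single (⟨j0, hj0⟩ : J)] <;> simp +contextual
  exact (norm_nonneg _).trans (le_subOpNorm hU I J _ _ hx hy)

end SubOp

section SCoef
variable {d : ℕ} {U : Matrix (Fin d) (Fin d) ℂ}

lemma subOpNorm_mono (hU : U ∈ Matrix.unitaryGroup (Fin d) ℂ)
    {I I' J J' : Finset (Fin d)} (hI : I.Nonempty) (hJ : J.Nonempty)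
    (hII : I ⊆ I') (hJJ : J ⊆ J') :
    subOpNorm U I J ≤ subOpNorm U I' J' := by
  refine Real.sSup_le ?_ (subOpNorm_nonneg hU (hI.mono hII) (hJ.mono hJJ))
  rintro r ⟨x, y, hx, hy, rfl⟩
  set x' : I' → ℂ := fun i => if h : i.1 ∈ I then x ⟨i.1, h⟩ else 0 with hx'def
  set y' : J' → ℂ := fun j => if h : j.1 ∈ J then y ⟨j.1, h⟩ else 0 with hy'def
  have hext1 : extC I' x' = extC I x := by
    funext a
    simp only [extC, x']
    by_cases h : a ∈ I
    · rw [dif_pos (hII h), dif_pos h]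
    · rw [dif_neg h]
      by_cases h' : a ∈ I'
      · rw [dif_pos h', dif_neg h]
      · rw [dif_neg h']
  have hext2 : extC J' y' = extC J y := by
    funext a
    simp only [extC, y']
    by_cases h : a ∈ J
    · rw [dif_pos (hJJ h), dif_pos h]
    · rw [dif_neg h]
      by_cases h' : a ∈ J'
      · rw [dif_pos h', dif_neg h]
      · rw [dif_neg h']
  have hnx : ∑ i, ‖x' i‖ ^ 2 = 1 := by
    rw [← nsq_extC, hext1, nsq_extC, hx]
  have hny : ∑ j, ‖y' j‖ ^ 2 = 1 := by
    rw [← nsq_extC, hext2, nsq_extC, hy]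
  have hval : ∑ i : I', ∑ j : J', (starRingEnd ℂ) (x' i) * U i.1 j.1 * y' j
      = ∑ i : I, ∑ j : J, (starRingEnd ℂ) (x i) * U i.1 j.1 * y j := by
    rw [← dot_extC, ← dot_extC, hext1, hext2]
  rw [← hval]
  exact le_subOpNorm hU I' J' x' y' hnx hny

lemma sCoef_bddAbove (hU : U ∈ Matrix.unitaryGroup (Fin d) ℂ) (k : ℕ) :
    BddAbove { r : ℝ | ∃ I J : Finset (Fin d), I.Nonempty ∧ J.Nonempty ∧
      I.card + J.card = k + 1 ∧ r = subOpNorm U I J } := by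
  refine ⟨1, ?_⟩
  rintro r ⟨I, J, _, _, _, rfl⟩
  exact subOpNorm_le_one hU I J

lemma sCoef_le_one (hU : U ∈ Matrix.unitaryGroup (Fin d) ℂ) (k : ℕ) :
    sCoef U k ≤ 1 := by
  refine Real.sSup_le ?_ zero_le_one
  rintro r ⟨I, J, _, _, _, rfl⟩
  exact subOpNorm_le_one hU I J

lemma subOpNorm_le_sCoef (hU : U ∈ Matrix.unitaryGroup (Fin d) ℂ)
    {I J : Finset (Fin d)} (hI : I.Nonempty) (hJ : J.Nonempty) {k : ℕ}
    (hcard : I.card + J.card = k + 1) :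
    subOpNorm U I J ≤ sCoef U k :=
  le_csSup (sCoef_bddAbove hU k) ⟨I, J, hI, hJ, hcard, rfl⟩

lemma sCoef_nonneg (hU : U ∈ Matrix.unitaryGroup (Fin d) ℂ) {k : ℕ}
    (hk1 : 1 ≤ k) (hkd : k ≤ d) : 0 ≤ sCoef U k := by
  obtain ⟨I, _, hIcard⟩ := Finset.exists_subset_card_eq (s := (Finset.univ : Finset (Fin d))) (n := k)
    (by simpa using hkd)
  have hI : I.Nonempty := Finset.card_pos.mp (hIcard ▸ hk1)
  obtain ⟨i0, hi0⟩ := hI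
  refine (subOpNorm_nonneg hU ⟨i0, hi0⟩ (Finset.singleton_nonempty i0)).trans
    (subOpNorm_le_sCoef hU ⟨i0, hi0⟩ (Finset.singleton_nonempty i0) ?_)
  rw [hIcard, Finset.card_singleton]

lemma sCoef_mono_succ (hU : U ∈ Matrix.unitaryGroup (Fin d) ℂ) {k : ℕ}
    (hk1 : 1 ≤ k) (hkd : k + 1 ≤ d) : sCoef U k ≤ sCoef U (k + 1) := by
  refine Real.sSup_le ?_ (sCoef_nonneg hU (by omega) hkd)
  rintro r ⟨I, J, hI, hJ, hcard, rfl⟩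
  have hIlt : I.card < d := by
    have := hJ.card_pos
    omega
  have : ¬ (Finset.univ ⊆ I) := by
    intro h
    have := Finset.card_le_card h
    simp at this
    omega
  obtain ⟨a, _, ha⟩ := Finset.not_subset.mp this
  refine (subOpNorm_mono hU hI hJ (Finset.subset_insert a I) (subset_refl J)).trans
    (subOpNorm_le_sCoef hU (Finset.insert_nonempty a I) hJ ?_)
  rw [Finset.card_insert_of_notMem ha]
  omega

lemma sCoef_mono (hU : U ∈ Matrix.unitaryGroup (Fin d) ℂ) {k l : ℕ}
    (hk1 : 1 ≤ k) (hkl : k ≤ l) (hld : l ≤ d) : sCoef U k ≤ sCoef U l := by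
  induction l with
  | zero => omega
  | succ n ih =>
    rcases Nat.lt_or_ge k (n+1) with h | h
    · exact (ih (by omega) (by omega)).trans (sCoef_mono_succ hU (by omega) hld)
    · have : k = n + 1 := by omega
      rw [this]

end SCoef

lemma conj_mul_self_re (z : ℂ) : ((starRingEnd ℂ) z * z).re = ‖z‖ ^ 2 := by
  rw [← Complex.normSq_eq_norm_sq, ← Complex.normSq_eq_conj_mul_self]
  simp

lemma conj_mul_self_eq (z : ℂ) : (starRingEnd ℂ) z * z = ((‖z‖ ^ 2 : ℝ) : ℂ) := by
  rw [← Complex.normSq_eq_conj_mul_self, ← Complex.normSq_eq_norm_sq]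

lemma col_norm_one {d : ℕ} {U : Matrix (Fin d) (Fin d) ℂ}
    (hU : U ∈ Matrix.unitaryGroup (Fin d) ℂ) (j : Fin d) :
    ∑ a : Fin d, ‖U a j‖ ^ 2 = 1 := by
  have h1 : Uᴴ * U = 1 := hU.1
  have h2 : (Uᴴ * U) j j = 1 := by rw [h1]; simp
  rw [Matrix.mul_apply] at h2
  simp only [Matrix.conjTranspose_apply] at h2
  have h3 := congrArg Complex.re h2
  rw [Complex.re_sum, Complex.one_re] at h3
  rw [← h3]
  refine Finset.sum_congr rfl fun a _ => ?_
  rw [← conj_mul_self_re]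
  rfl

lemma sCoef_d_eq_one {d : ℕ} (hd : 1 ≤ d) {U : Matrix (Fin d) (Fin d) ℂ}
    (hU : U ∈ Matrix.unitaryGroup (Fin d) ℂ) : sCoef U d = 1 := by
  refine le_antisymm (sCoef_le_one hU d) ?_
  set j0 : Fin d := ⟨0, by omega⟩
  set I : Finset (Fin d) := Finset.univ
  set J : Finset (Fin d) := {j0}
  set x : I → ℂ := fun i => U i.1 j0 with hxdef
  set y : J → ℂ := fun _ => 1 with hydef
  have hx : ∑ i, ‖x i‖ ^ 2 = 1 := by
    rw [Finset.sum_coe_sort I (fun a => ‖U a j0‖ ^ 2)]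
    simpa [I] using col_norm_one hU j0
  have hy : ∑ j, ‖y j‖ ^ 2 = 1 := by
    simp [hydef, J]
  have hval : ∑ i : I, ∑ j : J, (starRingEnd ℂ) (x i) * U i.1 j.1 * y j = 1 := by
    have hinner : ∀ i : I, ∑ j : J, (starRingEnd ℂ) (x i) * U i.1 j.1 * y j
        = (starRingEnd ℂ) (U i.1 j0) * U i.1 j0 := by
      intro i
      rw [Finset.sum_coe_sort J (fun b => (starRingEnd ℂ) (x i) * U i.1 b * 1)]
      simp [J, x]
    rw [Finset.sum_congr rfl (fun i _ => hinner i),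
      Finset.sum_coe_sort I (fun a => (starRingEnd ℂ) (U a j0) * U a j0)]
    have : ∀ a ∈ (I : Finset (Fin d)), (starRingEnd ℂ) (U a j0) * U a j0
        = ((‖U a j0‖ ^ 2 : ℝ) : ℂ) := fun a _ => conj_mul_self_eq _
    rw [Finset.sum_congr rfl this, ← Complex.ofReal_sum]
    rw [show ∑ a ∈ (I : Finset (Fin d)), ‖U a j0‖ ^ 2 = 1 from by
      simpa [I] using col_norm_one hU j0]
    simp
  have := le_subOpNorm hU I J x y hx hy
  rw [hval] at this
  simp only [norm_one] at this
  refine this.trans (subOpNorm_le_sCoef hU ⟨j0, Finset.mem_univ j0⟩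
    (Finset.singleton_nonempty j0) ?_)
  simp [I, J, Finset.card_univ]

section Key
variable {d : ℕ} {U : Matrix (Fin d) (Fin d) ℂ}

lemma re_le_norm (z : ℂ) : z.re ≤ ‖z‖ := Complex.re_le_norm z


lemma aux_sqrt_ineq {m N t : ℝ} (hm : 0 ≤ m) (hN : 0 ≤ N) (ht : 0 ≤ t)
    (h : m ≤ Real.sqrt N * Real.sqrt ((1 + t) * m)) : m ≤ (1 + t) * N := by
  rcases eq_or_lt_of_le hm with h0 | hmpos
  · nlinarith
  · have h1 : m * m ≤ (Real.sqrt N * Real.sqrt ((1 + t) * m)) ^ 2 := by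
      nlinarith
    have h2 : (Real.sqrt N * Real.sqrt ((1 + t) * m)) ^ 2 = N * ((1 + t) * m) := by
      rw [mul_pow, Real.sq_sqrt hN, Real.sq_sqrt (mul_nonneg (by linarith) hm)]
    nlinarith

lemma key_vec (hU : U ∈ Matrix.unitaryGroup (Fin d) ℂ)
    {I J : Finset (Fin d)} (hI : I.Nonempty) (hJ : J.Nonempty) (v : Fin d → ℂ) :
    ∑ i ∈ I, ‖v i‖ ^ 2 + ∑ j ∈ J, ‖(Uᴴ.mulVec v) j‖ ^ 2
      ≤ (1 + subOpNorm U I J) * nsq v := by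
  classical
  set u : Fin d → ℂ := Uᴴ.mulVec v with hu
  set P : Fin d → ℂ := extC I (fun i => v i.1) with hP
  set w : Fin d → ℂ := extC J (fun j => u j.1) with hw
  set Q : Fin d → ℂ := U.mulVec w with hQ
  set cc : ℝ := ∑ i ∈ I, ‖v i‖ ^ 2 with hcc
  set ss : ℝ := ∑ j ∈ J, ‖u j‖ ^ 2 with hss
  set t : ℝ := subOpNorm U I J with ht
  have ht0 : 0 ≤ t := subOpNorm_nonneg hU hI hJ
  have hcc0 : 0 ≤ cc := Finset.sum_nonneg fun _ _ => by positivity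
  have hss0 : 0 ≤ ss := Finset.sum_nonneg fun _ _ => by positivity
  have hccs : (∑ i : I, ‖v i.1‖ ^ 2) = cc := by
    rw [hcc, ← Finset.sum_attach I (fun a => ‖v a‖ ^ 2), Finset.univ_eq_attach]
  have hsss : (∑ j : J, ‖u j.1‖ ^ 2) = ss := by
    rw [hss, ← Finset.sum_attach J (fun a => ‖u a‖ ^ 2), Finset.univ_eq_attach]
  have hnsqP : nsq P = cc := by rw [hP, nsq_extC]; exact hccs
  have hnsqw : nsq w = ss := by rw [hw, nsq_extC]; exact hsss
  have hnsqQ : nsq Q = ss := by rw [hQ, nsq_mulVec hU]; exact hnsqw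
  have hvP : (star v ⬝ᵥ P).re = cc := by
    have h1 : star v ⬝ᵥ P = ∑ a : Fin d, (starRingEnd ℂ) (v a) * P a := by
      simp [dotProduct, Complex.star_def]
    rw [h1, hP, sum_extC I (fun a z => (starRingEnd ℂ) (v a) * z) (fun a => by simp)]
    rw [Complex.re_sum, ← hccs]
    exact Finset.sum_congr rfl fun i _ => conj_mul_self_re _
  have hvU : star v ᵥ* U = star u := by
    funext b
    simp only [Matrix.vecMul, dotProduct, Pi.star_apply, hu, Matrix.mulVec,
      Matrix.conjTranspose_apply]
    rw [star_sum]
    refine Finset.sum_congr rfl fun a _ => ?_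
    rw [star_mul']
    simp [mul_comm]
  have hvQ : (star v ⬝ᵥ Q).re = ss := by
    rw [hQ, Matrix.dotProduct_mulVec, hvU]
    have h1 : star u ⬝ᵥ w = ∑ a : Fin d, (starRingEnd ℂ) (u a) * w a := by
      simp [dotProduct, Complex.star_def]
    rw [h1, hw, sum_extC J (fun a z => (starRingEnd ℂ) (u a) * z) (fun a => by simp)]
    rw [Complex.re_sum, ← hsss]
    exact Finset.sum_congr rfl fun j _ => conj_mul_self_re _
  have hPQ : ‖star P ⬝ᵥ Q‖ ≤ t * (Real.sqrt cc * Real.sqrt ss) := by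
    rw [hP, hQ, hw, dot_extC]
    by_cases hc : cc = 0
    · have hv0 : ∀ i : I, v i.1 = 0 := by
        intro i
        have := (Finset.sum_eq_zero_iff_of_nonneg
          (fun a _ => by positivity : ∀ a ∈ I, (0:ℝ) ≤ ‖v a‖ ^ 2)).mp (hcc.symm.trans hc) i.1 i.2
        simpa using this
      have hz : ∑ i : I, ∑ j : J, (starRingEnd ℂ) (v i.1) * U i.1 j.1 * u j.1 = 0 := by
        refine Finset.sum_eq_zero fun i _ => Finset.sum_eq_zero fun j _ => ?_
        rw [hv0 i]; simp
      rw [hz, norm_zero]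
      positivity
    · by_cases hs : ss = 0
      · have hu0 : ∀ j : J, u j.1 = 0 := by
          intro j
          have := (Finset.sum_eq_zero_iff_of_nonneg
            (fun a _ => by positivity : ∀ a ∈ J, (0:ℝ) ≤ ‖u a‖ ^ 2)).mp (hss.symm.trans hs) j.1 j.2
          simpa using this
        have hz : ∑ i : I, ∑ j : J, (starRingEnd ℂ) (v i.1) * U i.1 j.1 * u j.1 = 0 := by
          refine Finset.sum_eq_zero fun i _ => Finset.sum_eq_zero fun j _ => ?_
          rw [hu0 j]; simp
        rw [hz, norm_zero]
        positivity
      · have hccpos : 0 < cc := lt_of_le_of_ne hcc0 (Ne.symm hc)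
        have hsspos : 0 < ss := lt_of_le_of_ne hss0 (Ne.symm hs)
        set c' : ℝ := Real.sqrt cc with hc'
        set s' : ℝ := Real.sqrt ss with hs'
        have hc'pos : 0 < c' := Real.sqrt_pos.mpr hccpos
        have hs'pos : 0 < s' := Real.sqrt_pos.mpr hsspos
        set x : I → ℂ := fun i => v i.1 / (c' : ℂ) with hx
        set y : J → ℂ := fun j => u j.1 / (s' : ℂ) with hy
        have hxn : ∑ i, ‖x i‖ ^ 2 = 1 := by
          have hterm : ∀ i : I, ‖x i‖ ^ 2 = ‖v i.1‖ ^ 2 / cc := by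
            intro i
            rw [hx]
            simp only [norm_div, Complex.norm_real, Real.norm_eq_abs,
              abs_of_pos hc'pos, div_pow]
            rw [hc', Real.sq_sqrt hcc0]
          rw [Finset.sum_congr rfl (fun i _ => hterm i), ← Finset.sum_div, hccs,
            div_self hc]
        have hyn : ∑ j, ‖y j‖ ^ 2 = 1 := by
          have hterm : ∀ j : J, ‖y j‖ ^ 2 = ‖u j.1‖ ^ 2 / ss := by
            intro j
            rw [hy]
            simp only [norm_div, Complex.norm_real, Real.norm_eq_abs,
              abs_of_pos hs'pos, div_pow]
            rw [hs', Real.sq_sqrt hss0]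
          rw [Finset.sum_congr rfl (fun j _ => hterm j), ← Finset.sum_div, hsss,
            div_self hs]
        have hval : ∑ i : I, ∑ j : J, (starRingEnd ℂ) (x i) * U i.1 j.1 * y j
            = (∑ i : I, ∑ j : J, (starRingEnd ℂ) (v i.1) * U i.1 j.1 * u j.1)
              / ((c' : ℂ) * (s' : ℂ)) := by
          rw [Finset.sum_div]
          refine Finset.sum_congr rfl fun i _ => ?_
          rw [Finset.sum_div]
          refine Finset.sum_congr rfl fun j _ => ?_
          rw [hx, hy]
          simp only [map_div₀, Complex.conj_ofReal]
          have hc'ne : (c' : ℂ) ≠ 0 := by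
            simpa using Complex.ofReal_ne_zero.mpr hc'pos.ne'
          have hs'ne : (s' : ℂ) ≠ 0 := by
            simpa using Complex.ofReal_ne_zero.mpr hs'pos.ne'
          field_simp
        have hle := le_subOpNorm hU I J x y hxn hyn
        rw [hval, norm_div] at hle
        have hden : ‖((c' : ℂ) * (s' : ℂ))‖ = c' * s' := by
          rw [norm_mul, Complex.norm_real, Complex.norm_real, Real.norm_eq_abs,
            Real.norm_eq_abs, abs_of_pos hc'pos, abs_of_pos hs'pos]
        rw [hden] at hle
        rw [div_le_iff₀ (mul_pos hc'pos hs'pos)] at hle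
        calc ‖∑ i : I, ∑ j : J, (starRingEnd ℂ) (v i.1) * U i.1 j.1 * u j.1‖
            ≤ t * (c' * s') := hle
          _ = t * (Real.sqrt cc * Real.sqrt ss) := by rw [hc', hs']
  -- main chain
  have hm : (star v ⬝ᵥ (P + Q)).re = cc + ss := by
    rw [dotProduct_add, Complex.add_re, hvP, hvQ]
  have h5 : cc + ss ≤ Real.sqrt (nsq v) * Real.sqrt (nsq (P + Q)) := by
    rw [← hm]
    exact (re_le_norm _).trans (cs_dot _ _)
  have h6 : nsq (P + Q) ≤ (1 + t) * (cc + ss) := by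
    rw [nsq_add, hnsqP, hnsqQ]
    have h2 : (star P ⬝ᵥ Q).re ≤ t * (Real.sqrt cc * Real.sqrt ss) :=
      (re_le_norm _).trans hPQ
    have h3 : 2 * (Real.sqrt cc * Real.sqrt ss) ≤ cc + ss := by
      nlinarith [sq_nonneg (Real.sqrt cc - Real.sqrt ss), Real.sq_sqrt hcc0,
        Real.sq_sqrt hss0]
    nlinarith [Real.sqrt_nonneg cc, Real.sqrt_nonneg ss]
  have h7 : cc + ss ≤ Real.sqrt (nsq v) * Real.sqrt ((1 + t) * (cc + ss)) :=
    h5.trans (mul_le_mul_of_nonneg_left (Real.sqrt_le_sqrt h6) (Real.sqrt_nonneg _))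
  exact aux_sqrt_ineq (add_nonneg hcc0 hss0) (nsq_nonneg v) ht0 h7

end Key

section SumPQ
variable {d : ℕ} {U : Matrix (Fin d) (Fin d) ℂ}

lemma norm_conj' (z : ℂ) : ‖(starRingEnd ℂ) z‖ = ‖z‖ := by
  simpa using norm_star z

lemma sum_pq (hU : U ∈ Matrix.unitaryGroup (Fin d) ℂ)
    {ρ : Matrix (Fin d) (Fin d) ℂ} (hρ : ρ.PosSemidef) (hρtr : ρ.trace = 1)
    {I J : Finset (Fin d)} (hI : I.Nonempty) (hJ : J.Nonempty) :
    ∑ i ∈ I, (ρ i i).re + ∑ j ∈ J, ((Uᴴ * ρ * U) j j).re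
      ≤ 1 + subOpNorm U I J := by
  classical
  obtain ⟨B, hB⟩ : ∃ B : Matrix (Fin d) (Fin d) ℂ, ρ = Bᴴ * B := by
    open scoped MatrixOrder in
    obtain ⟨B, hB⟩ := CStarAlgebra.nonneg_iff_eq_star_mul_self.mp hρ.nonneg
    exact ⟨B, hB⟩
  set v : Fin d → Fin d → ℂ := fun m a => (starRingEnd ℂ) (B m a) with hv
  have h_p : ∀ i, (ρ i i).re = ∑ m, ‖v m i‖ ^ 2 := by
    intro i
    rw [hB, Matrix.mul_apply]
    rw [Complex.re_sum]
    refine Finset.sum_congr rfl fun m _ => ?_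
    rw [Matrix.conjTranspose_apply]
    rw [show (star (B m i) * B m i) = (starRingEnd ℂ) (B m i) * B m i from rfl]
    rw [conj_mul_self_re, hv]
    rw [norm_conj']
  have hBU : ∀ m j, (Uᴴ.mulVec (v m)) j = (starRingEnd ℂ) ((B * U) m j) := by
    intro m j
    simp only [Matrix.mulVec, dotProduct, Matrix.conjTranspose_apply,
      Matrix.mul_apply, hv, map_sum]
    refine Finset.sum_congr rfl fun a _ => ?_
    rw [map_mul]
    rw [show star (U a j) = (starRingEnd ℂ) (U a j) from rfl]
    ring
  have h_q : ∀ j, ((Uᴴ * ρ * U) j j).re = ∑ m, ‖(Uᴴ.mulVec (v m)) j‖ ^ 2 := by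
    intro j
    have heq : Uᴴ * ρ * U = (B * U)ᴴ * (B * U) := by
      rw [hB, Matrix.conjTranspose_mul]
      noncomm_ring
    rw [heq, Matrix.mul_apply, Complex.re_sum]
    refine Finset.sum_congr rfl fun m _ => ?_
    rw [Matrix.conjTranspose_apply,
      show (star ((B * U) m j) * (B * U) m j)
        = (starRingEnd ℂ) ((B * U) m j) * (B * U) m j from rfl,
      conj_mul_self_re, hBU m j, norm_conj']
  have h_tr : ∑ m, nsq (v m) = 1 := by
    have h1 := congrArg Complex.re hρtr
    rw [Matrix.trace, Complex.re_sum, Complex.one_re] at h1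
    have h2 : ∑ i : Fin d, ((ρ.diag i)).re = ∑ m, nsq (v m) := by
      have h3 : ∀ i, ((ρ.diag i)).re = ∑ m, ‖v m i‖ ^ 2 := fun i => h_p i
      rw [Finset.sum_congr rfl fun i _ => h3 i, Finset.sum_comm]
      rfl
    rw [← h2, h1]
  have hkey : ∀ m, ∑ i ∈ I, ‖v m i‖ ^ 2 + ∑ j ∈ J, ‖(Uᴴ.mulVec (v m)) j‖ ^ 2
      ≤ (1 + subOpNorm U I J) * nsq (v m) := fun m => key_vec hU hI hJ (v m)
  calc ∑ i ∈ I, (ρ i i).re + ∑ j ∈ J, ((Uᴴ * ρ * U) j j).re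
      = ∑ i ∈ I, ∑ m, ‖v m i‖ ^ 2 + ∑ j ∈ J, ∑ m, ‖(Uᴴ.mulVec (v m)) j‖ ^ 2 := by
        rw [Finset.sum_congr rfl fun i _ => h_p i, Finset.sum_congr rfl fun j _ => h_q j]
    _ = ∑ m, (∑ i ∈ I, ‖v m i‖ ^ 2 + ∑ j ∈ J, ‖(Uᴴ.mulVec (v m)) j‖ ^ 2) := by
        rw [Finset.sum_add_distrib, Finset.sum_comm]
        congr 1
        rw [Finset.sum_comm]
    _ ≤ ∑ m, (1 + subOpNorm U I J) * nsq (v m) :=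
        Finset.sum_le_sum fun m _ => hkey m
    _ = (1 + subOpNorm U I J) * ∑ m, nsq (v m) := by rw [Finset.mul_sum]
    _ = 1 + subOpNorm U I J := by rw [h_tr, mul_one]

end SumPQ

section Schur

lemma bernoulli_pt {a b α : ℝ} (ha : 0 ≤ a) (hb : 0 ≤ b) (hα : 1 < α) :
    α * a ^ (α - 1) * (b - a) ≤ b ^ α - a ^ α := by
  rcases eq_or_lt_of_le ha with h0 | hapos
  · rw [← h0, Real.zero_rpow (by linarith : α ≠ 0),
      Real.zero_rpow (by intro h; linarith [sub_eq_zero.mp h] : α - 1 ≠ 0)]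
    simp only [mul_zero, zero_mul, sub_zero]
    exact Real.rpow_nonneg hb α
  · have hane : a ≠ 0 := hapos.ne'
    have hs : -1 ≤ b / a - 1 := by
      have : 0 ≤ b / a := div_nonneg hb ha
      linarith
    have hber := one_add_mul_self_le_rpow_one_add hs hα.le
    rw [show 1 + (b / a - 1) = b / a by ring] at hber
    have hpow : (b / a) ^ α = b ^ α / a ^ α := Real.div_rpow hb ha α
    rw [hpow] at hber
    have hapow : (0:ℝ) < a ^ α := Real.rpow_pos_of_pos hapos α
    have key : (1 + α * (b / a - 1)) * a ^ α ≤ b ^ α := by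
      calc (1 + α * (b / a - 1)) * a ^ α ≤ (b ^ α / a ^ α) * a ^ α :=
            mul_le_mul_of_nonneg_right hber hapow.le
        _ = b ^ α := div_mul_cancel₀ _ hapow.ne'
    have hid : α * a ^ (α - 1) * (b - a) = α * (b / a - 1) * a ^ α := by
      rw [Real.rpow_sub_one hane]
      field_simp
    rw [hid]
    nlinarith [key]

lemma abel_nonneg (n : ℕ) (dd δ : ℕ → ℝ)
    (hd0 : ∀ i, i < n → 0 ≤ dd i)
    (hdanti : ∀ i, i + 1 < n → dd (i + 1) ≤ dd i)
    (hD : ∀ k, k ≤ n → 0 ≤ ∑ i ∈ Finset.range k, δ i)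
    (hDn : ∑ i ∈ Finset.range n, δ i = 0) :
    0 ≤ ∑ i ∈ Finset.range n, dd i * δ i := by
  rcases Nat.eq_zero_or_pos n with rfl | hn
  · simp
  have habel := Finset.sum_range_by_parts dd δ n
  simp only [smul_eq_mul] at habel
  rw [habel, hDn, mul_zero, zero_sub, le_neg, neg_zero]
  refine Finset.sum_nonpos fun i hi => ?_
  have hi' : i < n - 1 := Finset.mem_range.mp hi
  have h1 : dd (i + 1) ≤ dd i := hdanti i (by omega)
  have h2 : 0 ≤ ∑ j ∈ Finset.range (i + 1), δ j := hD (i + 1) (by omega)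
  nlinarith

lemma schur_range (n : ℕ) (a b : ℕ → ℝ) (α : ℝ) (hα : 1 < α)
    (ha0 : ∀ i, i < n → 0 ≤ a i) (hb0 : ∀ i, i < n → 0 ≤ b i)
    (hanti : ∀ i, i + 1 < n → a (i + 1) ≤ a i)
    (hpre : ∀ k, k ≤ n → ∑ i ∈ Finset.range k, a i ≤ ∑ i ∈ Finset.range k, b i)
    (htot : ∑ i ∈ Finset.range n, a i = ∑ i ∈ Finset.range n, b i) :
    ∑ i ∈ Finset.range n, a i ^ α ≤ ∑ i ∈ Finset.range n, b i ^ α := by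
  have h2 : 0 ≤ ∑ i ∈ Finset.range n, (α * a i ^ (α - 1)) * (b i - a i) := by
    refine abel_nonneg n _ _ (fun i _ => ?_) (fun i hi => ?_) (fun k hk => ?_) ?_
    · exact mul_nonneg (by linarith) (Real.rpow_nonneg (ha0 i ‹_›) _)
    · have := Real.rpow_le_rpow (ha0 (i + 1) hi) (hanti i hi) (by linarith : (0:ℝ) ≤ α - 1)
      nlinarith
    · rw [Finset.sum_sub_distrib]
      have := hpre k hk
      linarith
    · rw [Finset.sum_sub_distrib, htot, sub_self]
  have h1 : ∑ i ∈ Finset.range n, (α * a i ^ (α - 1)) * (b i - a i)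
      ≤ ∑ i ∈ Finset.range n, (b i ^ α - a i ^ α) := by
    refine Finset.sum_le_sum fun i hi => ?_
    have := bernoulli_pt (ha0 i (Finset.mem_range.mp hi)) (hb0 i (Finset.mem_range.mp hi)) hα
    linarith [this]
  rw [Finset.sum_sub_distrib] at h1
  linarith
end Schur

section SchurFin

lemma sum_range_dite {M : Type*} [AddCommMonoid M] {n : ℕ} (k : ℕ) (hk : k ≤ n)
    (F : Fin n → M) :
    ∑ m ∈ Finset.range k, (if h : m < n then F ⟨m, h⟩ else 0)
      = ∑ i ∈ Finset.univ.filter (fun i : Fin n => i.val < k), F i := by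
  refine Finset.sum_bij' (i := fun m hm => (⟨m, lt_of_lt_of_le (Finset.mem_range.mp hm) hk⟩ : Fin n))
    (j := fun i _ => i.val) ?_ ?_ ?_ ?_ ?_
  · intro m hm
    simp [Finset.mem_range.mp hm]
  · intro i hi
    simp only [Finset.mem_filter, Finset.mem_univ, true_and] at hi
    exact Finset.mem_range.mpr hi
  · intro m hm
    rfl
  · intro i hi
    rfl
  · intro m hm
    rw [dif_pos (lt_of_lt_of_le (Finset.mem_range.mp hm) hk)]

lemma schur_fin {n : ℕ} (x : Fin n → ℝ) (Y : ℕ → ℝ) (α : ℝ) (hα : 1 < α)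
    (hx0 : ∀ i, 0 ≤ x i) (hY0 : ∀ m, 0 ≤ Y m)
    (hmaj : ∀ S : Finset (Fin n), ∑ i ∈ S, x i ≤ ∑ m ∈ Finset.range S.card, Y m)
    (htot : ∑ i, x i = ∑ m ∈ Finset.range n, Y m) :
    ∑ i, x i ^ α ≤ ∑ m ∈ Finset.range n, Y m ^ α := by
  classical
  set σ := Tuple.sort x with hσ
  have hmono : Monotone (x ∘ σ) := Tuple.monotone_sort x
  set e : Fin n → Fin n := fun i => σ (Fin.rev i) with he
  have hinj : Function.Injective e := σ.injective.comp Fin.rev_injective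
  set S : ℕ → Finset (Fin n) :=
    fun k => (Finset.univ.filter (fun i : Fin n => i.val < k)).image e with hS
  have hsum : ∀ (G : ℝ → ℝ) (k : ℕ), k ≤ n →
      ∑ m ∈ Finset.range k, (if h : m < n then G (x (e ⟨m, h⟩)) else 0)
        = ∑ i ∈ S k, G (x i) := by
    intro G k hk
    rw [hS]
    rw [Finset.sum_image (fun a _ b _ hab => hinj hab)]
    exact sum_range_dite k hk (fun i => G (x (e i)))
  have hcard : ∀ k, k ≤ n → (S k).card = k := by
    intro k hk
    rw [hS, Finset.card_image_of_injective _ hinj]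
    have h1 := sum_range_dite (M := ℕ) k hk (fun _ => 1)
    rw [Finset.card_eq_sum_ones]
    rw [← h1]
    rw [Finset.sum_congr rfl fun m hm =>
      dif_pos (lt_of_lt_of_le (Finset.mem_range.mp hm) hk)]
    simp
  have hSn : S n = Finset.univ := by
    apply Finset.eq_univ_iff_forall.mpr
    intro i
    rw [hS]
    refine Finset.mem_image.mpr ⟨Fin.rev (σ.symm i), ?_, ?_⟩
    · simp [Fin.is_lt]
    · rw [he]
      simp
  set a : ℕ → ℝ := fun m => if h : m < n then x (e ⟨m, h⟩) else 0 with ha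
  have key := schur_range n a Y α hα
    (fun i hi => by
      show (0:ℝ) ≤ if h : i < n then x (e ⟨i, h⟩) else 0
      rw [dif_pos hi]; exact hx0 _)
    (fun i _ => hY0 i)
    (fun i hi => by
      show (if h : i + 1 < n then x (e ⟨i + 1, h⟩) else 0)
        ≤ (if h : i < n then x (e ⟨i, h⟩) else 0)
      rw [dif_pos hi, dif_pos (by omega : i < n)]
      refine hmono ?_
      rw [Fin.rev_le_rev]
      exact Fin.mk_le_mk.mpr (by omega))
    (fun k hk => by
      rw [show ∑ i ∈ Finset.range k, a i
          = ∑ m ∈ Finset.range k, (if h : m < n then x (e ⟨m, h⟩) else 0) from rfl,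
        hsum (fun t => t) k hk]
      have := hmaj (S k)
      rw [hcard k hk] at this
      exact this)
    (by
      rw [show ∑ i ∈ Finset.range n, a i
          = ∑ m ∈ Finset.range n, (if h : m < n then x (e ⟨m, h⟩) else 0) from rfl,
        hsum (fun t => t) n le_rfl, hSn]
      exact htot)
  have hfin : ∑ i ∈ Finset.range n, a i ^ α = ∑ i, x i ^ α := by
    rw [show ∑ i ∈ Finset.range n, a i ^ α
        = ∑ m ∈ Finset.range n, (if h : m < n then x (e ⟨m, h⟩) ^ α else 0) from ?_,
      hsum (fun t => t ^ α) n le_rfl, hSn]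
    refine Finset.sum_congr rfl fun m hm => ?_
    have hmn : m < n := Finset.mem_range.mp hm
    show (if h : m < n then x (e ⟨m, h⟩) else 0) ^ α
      = (if h : m < n then x (e ⟨m, h⟩) ^ α else 0)
    rw [dif_pos hmn, dif_pos hmn]
  rw [← hfin]
  exact key

end SchurFin

noncomputable def Wnat {d : ℕ} (U : Matrix (Fin d) (Fin d) ℂ) : ℕ → ℝ :=
  fun m => if h : m < d then Wvec U ⟨m, h⟩ else 0

noncomputable def Ynat {d : ℕ} (U : Matrix (Fin d) (Fin d) ℂ) : ℕ → ℝ :=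
  fun m => if m = 0 then 1 else Wnat U (m - 1)

section YFacts
variable {d : ℕ} {U : Matrix (Fin d) (Fin d) ℂ}

lemma Wnat_lt {m : ℕ} (h : m < d) : Wnat U m = Wvec U ⟨m, h⟩ := dif_pos h

lemma Wnat_ge {m : ℕ} (h : ¬ m < d) : Wnat U m = 0 := dif_neg h

lemma Ynat_zero : Ynat U 0 = 1 := by simp [Ynat]

lemma Ynat_succ (m : ℕ) : Ynat U (m + 1) = Wnat U m := by simp [Ynat]

lemma Wvec_eq (k : Fin d) :
    Wvec U k = sCoef U (k.val + 1) - (if k.val = 0 then 0 else sCoef U k.val) := rfl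

lemma Wnat_nonneg (hU : U ∈ Matrix.unitaryGroup (Fin d) ℂ) (hd1 : 1 ≤ d) (m : ℕ) :
    0 ≤ Wnat U m := by
  by_cases h : m < d
  · rw [Wnat_lt h, Wvec_eq]
    by_cases h0 : m = 0
    · subst h0
      simp only [if_pos rfl, sub_zero]
      simpa using sCoef_nonneg hU le_rfl (by omega : 1 ≤ d)
    · simp only [if_neg h0]
      have := sCoef_mono hU (by omega : 1 ≤ m) (by omega : m ≤ m + 1) (by omega)
      linarith
  · rw [Wnat_ge h]

lemma Ynat_nonneg (hU : U ∈ Matrix.unitaryGroup (Fin d) ℂ) (hd1 : 1 ≤ d) (m : ℕ) :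
    0 ≤ Ynat U m := by
  rcases m with _ | m
  · rw [Ynat_zero]; norm_num
  · rw [Ynat_succ]; exact Wnat_nonneg hU hd1 m

lemma Ynat_tel (hU : U ∈ Matrix.unitaryGroup (Fin d) ℂ) (hd1 : 1 ≤ d) :
    ∀ j, 1 ≤ j → j ≤ d →
      ∑ m ∈ Finset.range (j + 1), Ynat U m = 1 + sCoef U j := by
  intro j hj1 hjd
  induction j with
  | zero => omega
  | succ n ih =>
    rcases Nat.eq_zero_or_pos n with rfl | hn
    · rw [Finset.sum_range_succ, Finset.sum_range_one, Ynat_zero, Ynat_succ,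
        Wnat_lt (by omega : 0 < d), Wvec_eq]
      simp
    · rw [Finset.sum_range_succ, ih (by omega) (by omega), Ynat_succ,
        Wnat_lt (by omega : n < d), Wvec_eq]
      simp only [if_neg (by omega : ¬ n = 0)]
      ring

lemma Ynat_G2 (hU : U ∈ Matrix.unitaryGroup (Fin d) ℂ) (hd1 : 1 ≤ d) :
    ∀ k, d + 1 ≤ k → ∑ m ∈ Finset.range k, Ynat U m = 2 := by
  intro k hk
  have hsplit : ∑ m ∈ Finset.range (d+1), Ynat U m
      + ∑ m ∈ Finset.Ico (d+1) k, Ynat U m = ∑ m ∈ Finset.range k, Ynat U m := by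
    simp only [Finset.range_eq_Ico]
    exact Finset.sum_Ico_consecutive _ (by omega) hk
  have hzero : ∑ m ∈ Finset.Ico (d+1) k, Ynat U m = 0 := by
    refine Finset.sum_eq_zero fun m hm => ?_
    have hm1 := (Finset.mem_Ico.mp hm).1
    rcases m with _ | m
    · omega
    · rw [Ynat_succ, Wnat_ge (by omega)]
  rw [← hsplit, hzero, add_zero, Ynat_tel hU hd1 d hd1 le_rfl, sCoef_d_eq_one hd1 hU]
  norm_num

lemma Ynat_G1 (hU : U ∈ Matrix.unitaryGroup (Fin d) ℂ) (hd1 : 1 ≤ d) :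
    ∀ k, 1 ≤ k → 1 ≤ ∑ m ∈ Finset.range k, Ynat U m := by
  intro k hk
  have h0 : (0:ℕ) ∈ Finset.range k := Finset.mem_range.mpr (by omega)
  have h := Finset.single_le_sum (f := Ynat U) (fun m _ => Ynat_nonneg hU hd1 m) h0
  rw [Ynat_zero] at h
  exact h

end YFacts

lemma diag_re_nonneg {d : ℕ} {A : Matrix (Fin d) (Fin d) ℂ} (hA : A.PosSemidef)
    (i : Fin d) : 0 ≤ (A i i).re := by
  have h := hA.dotProduct_mulVec_nonneg (Pi.single i 1)
  have heq : star (Pi.single i 1 : Fin d → ℂ) ⬝ᵥ A.mulVec (Pi.single i 1) = A i i := by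
    simp [dotProduct, Matrix.mulVec, Pi.single_apply, apply_ite, Finset.sum_ite_eq',
      mul_comm]
  rw [heq] at h
  exact (Complex.le_def.mp h).1

/-- For Rényi entropies of order `α > 1`:
`H_α(p) + H_α(q) ≥ (2/(1-α)) ln((1 + ∑ᵢ Wᵢ^α)/2)` with
`W = (s₁, s₂ - s₁, …, s_d - s_{d-1})`. -/
theorem stmt_8 (d : ℕ) (hd : 2 ≤ d)
    (U : Matrix (Fin d) (Fin d) ℂ) (hU : U ∈ Matrix.unitaryGroup (Fin d) ℂ)
    (ρ : Matrix (Fin d) (Fin d) ℂ) (hρ : ρ.PosSemidef) (hρtr : ρ.trace = 1)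
    (p q : Fin d → ℝ)
    (hp : ∀ i, p i = (ρ i i).re)
    (hq : ∀ j, q j = ((Uᴴ * ρ * U) j j).re)
    (α : ℝ) (hα : 1 < α) :
    renyiEntropy α p + renyiEntropy α q ≥
      (2 / (1 - α)) * Real.log ((1 + ∑ i, Wvec U i ^ α) / 2) := by
  classical
  have hd1 : 1 ≤ d := by omega
  have hρq : (Uᴴ * ρ * U).PosSemidef := by
    have h := hρ.mul_mul_conjTranspose_same Uᴴ
    rwa [Matrix.conjTranspose_conjTranspose] at h
  have hUU : U * Uᴴ = 1 := hU.2
  have hρqtr : (Uᴴ * ρ * U).trace = 1 := by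
    rw [Matrix.trace_mul_cycle, hUU, Matrix.one_mul]
    exact hρtr
  have hp0 : ∀ i, 0 ≤ p i := fun i => (hp i) ▸ diag_re_nonneg hρ i
  have hq0 : ∀ j, 0 ≤ q j := fun j => (hq j) ▸ diag_re_nonneg hρq j
  have hpsum : ∑ i, p i = 1 := by
    have h1 := congrArg Complex.re hρtr
    rw [Matrix.trace, Complex.re_sum, Complex.one_re] at h1
    rw [Finset.sum_congr rfl fun i _ => hp i]
    exact h1
  have hqsum : ∑ j, q j = 1 := by
    have h1 := congrArg Complex.re hρqtr
    rw [Matrix.trace, Complex.re_sum, Complex.one_re] at h1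
    rw [Finset.sum_congr rfl fun j _ => hq j]
    exact h1
  -- the concatenated vector
  set x : Fin (d + d) → ℝ := Fin.append p q with hx
  have hx0 : ∀ i, 0 ≤ x i := by
    intro i
    refine Fin.addCases (fun a => ?_) (fun b => ?_) i
    · rw [hx, Fin.append_left]; exact hp0 a
    · rw [hx, Fin.append_right]; exact hq0 b
  have hmaj : ∀ S : Finset (Fin (d + d)),
      ∑ i ∈ S, x i ≤ ∑ m ∈ Finset.range S.card, Ynat U m := by
    intro S
    set A : Finset (Fin d) := Finset.univ.filter (fun a => Fin.castAdd d a ∈ S) with hAdef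
    set B : Finset (Fin d) := Finset.univ.filter (fun b => Fin.natAdd d b ∈ S) with hBdef
    have hSsum : ∑ i ∈ S, x i = ∑ a ∈ A, p a + ∑ b ∈ B, q b := by
      have h1 : ∑ i ∈ S, x i = ∑ i : Fin (d+d), if i ∈ S then x i else 0 := by
        rw [Finset.sum_ite_mem, Finset.univ_inter]
      rw [h1, Fin.sum_univ_add]
      congr 1
      · rw [hAdef, Finset.sum_filter]
        exact Finset.sum_congr rfl fun a _ => by rw [hx, Fin.append_left]
      · rw [hBdef, Finset.sum_filter]
        exact Finset.sum_congr rfl fun b _ => by rw [hx, Fin.append_right]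
    have hScard : S.card = A.card + B.card := by
      have h1 : S.card = ∑ i : Fin (d+d), if i ∈ S then 1 else 0 := by
        rw [Finset.sum_ite_mem, Finset.univ_inter, Finset.card_eq_sum_ones]
      rw [h1, Fin.sum_univ_add, hAdef, hBdef, Finset.card_filter, Finset.card_filter]
    have hApsub : ∑ a ∈ A, p a ≤ 1 := by
      rw [← hpsum]
      exact Finset.sum_le_sum_of_subset_of_nonneg A.subset_univ (fun i _ _ => hp0 i)
    have hBqsub : ∑ b ∈ B, q b ≤ 1 := by
      rw [← hqsum]
      exact Finset.sum_le_sum_of_subset_of_nonneg B.subset_univ (fun i _ _ => hq0 i)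
    by_cases hAne : A.Nonempty
    · by_cases hBne : B.Nonempty
      · have hkey := sum_pq hU hρ hρtr hAne hBne
        have hpq : ∑ a ∈ A, p a + ∑ b ∈ B, q b ≤ 1 + subOpNorm U A B := by
          rw [Finset.sum_congr rfl fun a (_ : a ∈ A) => hp a,
            Finset.sum_congr rfl fun b (_ : b ∈ B) => hq b]
          exact hkey
        have hk2 : 2 ≤ S.card := by
          have := hAne.card_pos
          have := hBne.card_pos
          omega
        rcases Nat.lt_or_ge S.card (d + 2) with hsmall | hbig
        · have hcards : A.card + B.card = (S.card - 1) + 1 := by omega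
          have hsub := subOpNorm_le_sCoef hU hAne hBne hcards
          have hrange : ∑ m ∈ Finset.range S.card, Ynat U m
              = 1 + sCoef U (S.card - 1) := by
            rw [show S.card = (S.card - 1) + 1 by omega]
            exact Ynat_tel hU hd1 (S.card - 1) (by omega) (by omega)
          rw [hSsum, hrange]
          linarith
        · rw [hSsum, Ynat_G2 hU hd1 S.card (by omega)]
          linarith
      · rw [hSsum, Finset.not_nonempty_iff_eq_empty.mp hBne, Finset.sum_empty, add_zero]
        rcases Nat.eq_zero_or_pos S.card with h0 | h1
        · have hAe : A = ∅ := by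
            have hS : S = ∅ := Finset.card_eq_zero.mp h0
            rw [hAdef, hS]
            simp
          rw [hAe, Finset.sum_empty, h0]
          simp
        · exact hApsub.trans (Ynat_G1 hU hd1 S.card h1)
    · rw [hSsum, Finset.not_nonempty_iff_eq_empty.mp hAne, Finset.sum_empty, zero_add]
      rcases Nat.eq_zero_or_pos S.card with h0 | h1
      · have hBe : B = ∅ := by
          have hS : S = ∅ := Finset.card_eq_zero.mp h0
          rw [hBdef, hS]
          simp
        rw [hBe, Finset.sum_empty, h0]
        simp
      · exact hBqsub.trans (Ynat_G1 hU hd1 S.card h1)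
  have htotx : ∑ i, x i = ∑ m ∈ Finset.range (d + d), Ynat U m := by
    rw [Ynat_G2 hU hd1 (d + d) (by omega), hx, Fin.sum_univ_add]
    rw [Finset.sum_congr rfl fun a (_ : a ∈ Finset.univ) => Fin.append_left p q a,
      Finset.sum_congr rfl fun b (_ : b ∈ Finset.univ) => Fin.append_right p q b,
      hpsum, hqsum]
    norm_num
  have hmain := schur_fin x (Ynat U) α hα hx0 (Ynat_nonneg hU hd1) hmaj htotx
  have hLHS : ∑ i, x i ^ α = ∑ i, p i ^ α + ∑ j, q j ^ α := by
    rw [hx, Fin.sum_univ_add]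
    congr 1
    · exact Finset.sum_congr rfl fun a _ => by rw [Fin.append_left]
    · exact Finset.sum_congr rfl fun b _ => by rw [Fin.append_right]
  have hRHS : ∑ m ∈ Finset.range (d + d), Ynat U m ^ α
      = 1 + ∑ i : Fin d, Wvec U i ^ α := by
    have hsplit : ∑ m ∈ Finset.range (d+1), Ynat U m ^ α
        + ∑ m ∈ Finset.Ico (d+1) (d+d), Ynat U m ^ α
        = ∑ m ∈ Finset.range (d+d), Ynat U m ^ α := by
      simp only [Finset.range_eq_Ico]
      exact Finset.sum_Ico_consecutive _ (by omega) (by omega)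
    have hzero : ∑ m ∈ Finset.Ico (d+1) (d+d), Ynat U m ^ α = 0 := by
      refine Finset.sum_eq_zero fun m hm => ?_
      have hm1 := (Finset.mem_Ico.mp hm).1
      rcases m with _ | m
      · omega
      · rw [Ynat_succ, Wnat_ge (by omega), Real.zero_rpow (by linarith : α ≠ 0)]
    have hfirst : ∑ m ∈ Finset.range (d+1), Ynat U m ^ α
        = 1 + ∑ m ∈ Finset.range d, Wnat U m ^ α := by
      rw [Finset.sum_range_succ', Ynat_zero, Real.one_rpow, add_comm]
      congr 1
    have hWsum : ∑ m ∈ Finset.range d, Wnat U m ^ α = ∑ i : Fin d, Wvec U i ^ α := by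
      rw [← Fin.sum_univ_eq_sum_range (fun m => Wnat U m ^ α) d]
      exact Finset.sum_congr rfl fun i _ => by rw [Wnat_lt i.isLt]
    rw [← hsplit, hzero, add_zero, hfirst, hWsum]
  rw [hLHS, hRHS] at hmain
  -- final entropy manipulation
  set SW : ℝ := ∑ i : Fin d, Wvec U i ^ α with hSWdef
  have hSW0 : 0 ≤ SW := by
    rw [hSWdef]
    refine Finset.sum_nonneg fun i _ => Real.rpow_nonneg ?_ α
    have h := Wnat_nonneg hU hd1 i.val
    rwa [Wnat_lt i.isLt, Fin.eta] at h
  have hPApos : 0 < ∑ i, p i ^ α := by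
    have hex : ∃ i, 0 < p i := by
      by_contra h
      push_neg at h
      have hz : ∀ i, p i = 0 := fun i => le_antisymm (h i) (hp0 i)
      rw [Finset.sum_congr rfl fun i _ => hz i] at hpsum
      simp at hpsum
    obtain ⟨i, hi⟩ := hex
    exact Finset.sum_pos' (fun j _ => Real.rpow_nonneg (hp0 j) α)
      ⟨i, Finset.mem_univ i, Real.rpow_pos_of_pos hi α⟩
  have hQBpos : 0 < ∑ j, q j ^ α := by
    have hex : ∃ j, 0 < q j := by
      by_contra h
      push_neg at h
      have hz : ∀ j, q j = 0 := fun j => le_antisymm (h j) (hq0 j)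
      rw [Finset.sum_congr rfl fun j _ => hz j] at hqsum
      simp at hqsum
    obtain ⟨j, hj⟩ := hex
    exact Finset.sum_pos' (fun i _ => Real.rpow_nonneg (hq0 i) α)
      ⟨j, Finset.mem_univ j, Real.rpow_pos_of_pos hj α⟩
  set PA : ℝ := ∑ i, p i ^ α
  set QB : ℝ := ∑ j, q j ^ α
  have hABle : PA * QB ≤ ((1 + SW) / 2) ^ 2 := by
    nlinarith [sq_nonneg (PA - QB), sq_nonneg (PA + QB - (1 + SW)), hmain,
      hPApos.le, hQBpos.le, hSW0]
  have hlog : Real.log PA + Real.log QB ≤ 2 * Real.log ((1 + SW) / 2) := by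
    rw [← Real.log_mul hPApos.ne' hQBpos.ne']
    have hsq : Real.log (((1 + SW) / 2) ^ 2) = 2 * Real.log ((1 + SW) / 2) := by
      rw [Real.log_pow]
      norm_num
    rw [← hsq]
    exact Real.log_le_log (mul_pos hPApos hQBpos) hABle
  rw [renyiEntropy, renyiEntropy]
  have hden : 1 / (1 - α) < 0 := div_neg_of_pos_of_neg one_pos (by linarith)
  rw [ge_iff_le, show (2 : ℝ) / (1 - α) = 2 * (1 / (1 - α)) by ring]
  have hprod := mul_nonneg (neg_nonneg.mpr hden.le) (sub_nonneg.mpr hlog)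
  nlinarith [hprod]
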